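/- Let L := Φ(−q⁹)² + 2q·Φ(−q⁹)·X(−q³) + 4q²·X(−q³)² and M := P(q³)² − q·Ψ(q⁹)·P(q³) + q²·Ψ(q⁹)², as formal power series in q, and write L⁴M⁴ = ∑_{m≥0} c_m q^m. Then the series ∑_{n≥0} c_{3n+2} q^{3n+2} equals 2·3²·q²·(q⁶;q⁶)_∞⁶(q⁹;q⁹)_∞²⁶/((q³;q³)_∞⁶(q¹⁸;q¹⁸)_∞¹⁰) + 8·3²·q⁵·(q⁶;q⁶)_∞³(q⁹;q⁹)_∞¹⁷/((q³;q³)_∞³(q¹⁸;q¹⁸)_∞) + 19·3³·q⁸·(q⁹;q⁹)_∞⁸(q¹⁸;q¹⁸)_∞⁸ − 64·3²·q¹¹·(q³;q³)_∞³(q¹⁸;q¹⁸)_∞¹⁷/((q⁶;q⁶)_∞³(q⁹;q⁹)_∞) + 128·3²·q¹⁴·(q³;q³)_∞⁶(q¹⁸;q¹⁸)_∞²⁶/((q⁶;q⁶)_∞⁶(q⁹;q⁹)_∞¹⁰). -/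

import Mathlib

open PowerSeries

/-- The infinite product `(q^j; q^k)_∞ = ∏_{n ≥ 0} (1 - q^(j + k*n))` as a formal power
series over `ℤ`: for `j ≥ 1` its `n`-th coefficient is the (stable) `n`-th coefficient
of the partial products `∏_{m < n+1} (1 - q^(j + k*m))`. -/
noncomputable def qp (j k : ℕ) : PowerSeries ℤ :=
  PowerSeries.mk fun n =>
    PowerSeries.coeff n
      (∏ m ∈ Finset.range (n + 1), (1 - (PowerSeries.X : PowerSeries ℤ) ^ (j + k * m)))

/-- Substitution of `q^k` for `q` in a formal power series (for `k ≥ 1`). -/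
noncomputable def substQ (k : ℕ) (f : PowerSeries ℤ) : PowerSeries ℤ :=
  PowerSeries.mk fun n => if k ∣ n then PowerSeries.coeff (n / k) f else 0

/-- `Φ(-q) = (q;q)_∞² / (q²;q²)_∞`. -/
noncomputable def Phi : PowerSeries ℤ := qp 1 1 ^ 2 * Ring.inverse (qp 2 2)

/-- `Ψ(q) = (q²;q²)_∞ / (q;q²)_∞`. -/
noncomputable def Psi : PowerSeries ℤ := qp 2 2 * Ring.inverse (qp 1 2)

/-- `P(q) = (q²;q⁶)_∞ (q⁴;q⁶)_∞ (q³;q³)_∞² / (q;q)_∞`. -/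
noncomputable def Pq : PowerSeries ℤ := qp 2 6 * qp 4 6 * qp 3 3 ^ 2 * Ring.inverse (qp 1 1)

/-- `X(-q) = (q;q)_∞ (q⁶;q⁶)_∞² / ((q²;q²)_∞ (q³;q³)_∞)`. -/
noncomputable def Xq : PowerSeries ℤ := qp 1 1 * qp 6 6 ^ 2 * Ring.inverse (qp 2 2 * qp 3 3)

/-- `Φ(-q³)` -/ noncomputable def Phi3 : PowerSeries ℤ := substQ 3 Phi
/-- `Φ(-q⁹)` -/ noncomputable def Phi9 : PowerSeries ℤ := substQ 9 Phi
/-- `Ψ(q³)` -/ noncomputable def Psi3 : PowerSeries ℤ := substQ 3 Psi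
/-- `Ψ(q⁹)` -/ noncomputable def Psi9 : PowerSeries ℤ := substQ 9 Psi
/-- `P(q³)` -/ noncomputable def P3 : PowerSeries ℤ := substQ 3 Pq
/-- `X(-q³)` -/ noncomputable def X3 : PowerSeries ℤ := substQ 3 Xq

/-- `L = Φ(-q⁹)² + 2q·Φ(-q⁹)·X(-q³) + 4q²·X(-q³)²` -/
noncomputable def L : PowerSeries ℤ :=
  Phi9 ^ 2 + 2 * (PowerSeries.X : PowerSeries ℤ) * Phi9 * X3 + 4 * (PowerSeries.X : PowerSeries ℤ) ^ 2 * X3 ^ 2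

/-- `M = P(q³)² - q·Ψ(q⁹)·P(q³) + q²·Ψ(q⁹)²` -/
noncomputable def M : PowerSeries ℤ :=
  P3 ^ 2 - (PowerSeries.X : PowerSeries ℤ) * Psi9 * P3 + (PowerSeries.X : PowerSeries ℤ) ^ 2 * Psi9 ^ 2

/-! ### Auxiliary development -/

section Aux

open Finset

/-- Partial products of the `qp` infinite product. -/
noncomputable def pp (j k N : ℕ) : PowerSeries ℤ :=
  ∏ m ∈ Finset.range N, (1 - (PowerSeries.X : PowerSeries ℤ) ^ (j + k * m))

lemma coeff_pp_stable {j k : ℕ} (hj : 1 ≤ j) (hk : 1 ≤ k) (n : ℕ) :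
    ∀ N, n + 1 ≤ N → coeff n (pp j k N) = coeff n (pp j k (n+1)) := by
  intro N hN
  induction N, hN using Nat.le_induction with
  | base => rfl
  | succ N hN ih =>
    rw [pp, Finset.prod_range_succ, ← pp, mul_sub, mul_one, map_sub,
      coeff_mul_X_pow', if_neg, sub_zero, ih]
    have : n + 1 ≤ k * N := le_trans hN (Nat.le_mul_of_pos_left N hk)
    omega

lemma coeff_qp {j k : ℕ} (hj : 1 ≤ j) (hk : 1 ≤ k) {n N : ℕ} (hN : n + 1 ≤ N) :
    coeff n (qp j k) = coeff n (pp j k N) := by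
  rw [qp, coeff_mk, ← pp, coeff_pp_stable hj hk n N hN]

lemma coeff_mul_congr {f f' g g' : PowerSeries ℤ} {n : ℕ}
    (hf : ∀ i ≤ n, coeff i f = coeff i f')
    (hg : ∀ i ≤ n, coeff i g = coeff i g') :
    coeff n (f * g) = coeff n (f' * g') := by
  rw [coeff_mul, coeff_mul]
  refine Finset.sum_congr rfl fun p hp => ?_
  rw [Finset.HasAntidiagonal.mem_antidiagonal] at hp
  rw [hf p.1 (by omega), hg p.2 (by omega)]

lemma pp_split_two (j k N : ℕ) :
    pp j k (2*N) = pp j (2*k) N * pp (j+k) (2*k) N := by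
  induction N with
  | zero => simp [pp]
  | succ N ih =>
    have h2 : 2*(N+1) = (2*N) + 1 + 1 := by ring
    rw [h2]
    simp only [pp, Finset.prod_range_succ] at ih ⊢
    rw [ih]
    have e1 : j + k * (2*N) = j + 2*k*N := by ring
    have e2 : j + k * (2*N+1) = j + k + 2*k*N := by ring
    rw [e1, e2]; ring

lemma pp_split_three (j k N : ℕ) :
    pp j k (3*N) = pp j (3*k) N * pp (j+k) (3*k) N * pp (j+2*k) (3*k) N := by
  induction N with
  | zero => simp [pp]
  | succ N ih =>
    have h2 : 3*(N+1) = (3*N) + 1 + 1 + 1 := by ring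
    rw [h2]
    simp only [pp, Finset.prod_range_succ] at ih ⊢
    rw [ih]
    have e1 : j + k * (3*N) = j + 3*k*N := by ring
    have e2 : j + k * (3*N+1) = j + k + 3*k*N := by ring
    have e3 : j + k * (3*N+2) = j + 2*k + 3*k*N := by ring
    rw [e1, e2, e3]; ring

lemma qp_split_two {j k : ℕ} (hj : 1 ≤ j) (hk : 1 ≤ k) :
    qp j k = qp j (2*k) * qp (j+k) (2*k) := by
  ext n
  rw [coeff_qp hj hk (N := 2*(n+1)) (by omega), pp_split_two,
    coeff_mul_congr (f' := pp j (2*k) (n+1)) (g' := pp (j+k) (2*k) (n+1))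
      (fun i hi => coeff_qp hj (by omega) (by omega))
      (fun i hi => coeff_qp (by omega) (by omega) (by omega))]

lemma qp_split_three {j k : ℕ} (hj : 1 ≤ j) (hk : 1 ≤ k) :
    qp j k = qp j (3*k) * qp (j+k) (3*k) * qp (j+2*k) (3*k) := by
  ext n
  rw [coeff_qp hj hk (N := 3*(n+1)) (by omega), pp_split_three,
    coeff_mul_congr (f' := pp j (3*k) (n+1) * pp (j+k) (3*k) (n+1)) (g' := pp (j+2*k) (3*k) (n+1))
      (fun i hi => coeff_mul_congr
        (fun i' hi' => coeff_qp hj (by omega) (by omega))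
        (fun i' hi' => coeff_qp (by omega) (by omega) (by omega)))
      (fun i hi => coeff_qp (by omega) (by omega) (by omega))]

lemma coeff_substQ (k n : ℕ) (f : PowerSeries ℤ) :
    coeff n (substQ k f) = if k ∣ n then coeff (n / k) f else 0 := by
  rw [substQ, coeff_mk]

lemma substQ_one {k : ℕ} (hk : 0 < k) : substQ k 1 = 1 := by
  ext n
  rw [coeff_substQ]
  by_cases h : k ∣ n
  · obtain ⟨m, rfl⟩ := h
    rw [if_pos ⟨m, rfl⟩, Nat.mul_div_cancel_left m hk]
    have : k*m = 0 ↔ m = 0 := by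
      constructor
      · intro h'
        rcases Nat.mul_eq_zero.mp h' with h'' | h''
        · omega
        · exact h''
      · rintro rfl; exact Nat.mul_zero k
    simp [coeff_one, this]
  · rw [if_neg h, coeff_one, if_neg (by rintro rfl; exact h (dvd_zero k))]

private lemma sum_range_mul_aux {A : Type*} [AddCommMonoid A] {k : ℕ} (hk : 0 < k)
    (F : ℕ → A) (hF : ∀ i, ¬ k ∣ i → F i = 0) (m : ℕ) :
    ∑ i ∈ Finset.range (k*m+1), F i = ∑ j ∈ Finset.range (m+1), F (k*j) := by
  rw [← Finset.sum_filter_add_sum_filter_not (Finset.range (k*m+1)) (fun i => k ∣ i) F]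
  rw [Finset.sum_eq_zero (fun i hi => hF i (Finset.mem_filter.mp hi).2), add_zero]
  refine Finset.sum_nbij' (fun i => i / k) (fun j => k * j) ?_ ?_ ?_ ?_ ?_
  · intro i hi
    simp only [Finset.mem_filter, Finset.mem_range] at hi ⊢
    obtain ⟨hi1, c, rfl⟩ := hi
    rw [Nat.mul_div_cancel_left c hk]
    nlinarith [hi1]
  · intro j hj
    simp only [Finset.mem_filter, Finset.mem_range] at hj ⊢
    exact ⟨by nlinarith, Dvd.intro j rfl⟩
  · intro i hi
    simp only [Finset.mem_filter] at hi
    exact (Nat.mul_div_cancel' hi.2)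
  · intro j hj
    exact Nat.mul_div_cancel_left j hk
  · intro i hi
    simp only [Finset.mem_filter] at hi
    rw [Nat.mul_div_cancel' hi.2]

lemma substQ_mul {k : ℕ} (hk : 0 < k) (f g : PowerSeries ℤ) :
    substQ k (f * g) = substQ k f * substQ k g := by
  ext n
  conv_rhs => rw [coeff_mul, Finset.Nat.sum_antidiagonal_eq_sum_range_succ
    (fun a b => coeff a (substQ k f) * coeff b (substQ k g))]
  rw [coeff_substQ]
  by_cases h : k ∣ n
  · obtain ⟨m, rfl⟩ := h
    rw [if_pos ⟨m, rfl⟩, Nat.mul_div_cancel_left m hk, coeff_mul,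
      Finset.Nat.sum_antidiagonal_eq_sum_range_succ (fun a b => coeff a f * coeff b g)]
    rw [sum_range_mul_aux hk _ (fun i hi => by
      rw [coeff_substQ, if_neg hi, zero_mul]) m]
    refine Finset.sum_congr rfl fun j hj => ?_
    rw [Finset.mem_range] at hj
    rw [coeff_substQ, coeff_substQ, if_pos ⟨j, rfl⟩, Nat.mul_div_cancel_left j hk,
      if_pos ⟨m - j, by
        have hh : k*(m-j) + k*j = k*m := by rw [← Nat.mul_add]; congr 1; omega
        omega⟩]
    congr 2
    have : k*m - k*j = k*(m-j) := by
      have hh : k*(m-j) + k*j = k*m := by rw [← Nat.mul_add]; congr 1; omega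
      omega
    rw [this, Nat.mul_div_cancel_left _ hk]
  · rw [if_neg h]
    symm
    refine Finset.sum_eq_zero fun i hi => ?_
    by_cases h1 : k ∣ i
    · have h2 : ¬ k ∣ (n - i) := by
        rw [Finset.mem_range] at hi
        intro h2
        have h3 := Nat.dvd_add h1 h2
        rw [Nat.add_sub_cancel' (by omega)] at h3
        exact h h3
      rw [coeff_substQ k (n - i), if_neg h2, mul_zero]
    · rw [coeff_substQ k i, if_neg h1, zero_mul]

lemma substQ_pow {k : ℕ} (hk : 0 < k) (f : PowerSeries ℤ) (m : ℕ) :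
    substQ k (f ^ m) = substQ k f ^ m := by
  induction m with
  | zero => simpa using substQ_one hk
  | succ m ih => rw [pow_succ, substQ_mul hk, ih, pow_succ]

lemma rinverse_eq {a b : PowerSeries ℤ} (h : a * b = 1) : Ring.inverse a = b := by
  have ha : IsUnit a := IsUnit.of_mul_eq_one _ h
  calc Ring.inverse a = Ring.inverse a * (a * b) := by rw [h, mul_one]
  _ = (Ring.inverse a * a) * b := by ring
  _ = b := by rw [Ring.inverse_mul_cancel a ha, one_mul]

lemma substQ_inverse {k : ℕ} (hk : 0 < k) {f : PowerSeries ℤ} (hf : IsUnit f) :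
    substQ k (Ring.inverse f) = Ring.inverse (substQ k f) := by
  have h1 : f * Ring.inverse f = 1 := Ring.mul_inverse_cancel f hf
  have h2 : substQ k f * substQ k (Ring.inverse f) = 1 := by
    rw [← substQ_mul hk, h1, substQ_one hk]
  exact (rinverse_eq h2).symm

lemma substQ_one_sub_X_pow {k : ℕ} (hk : 0 < k) (e : ℕ) :
    substQ k (1 - X ^ e) = 1 - X ^ (k * e) := by
  ext n
  rw [coeff_substQ, map_sub, map_sub, coeff_one, coeff_one, coeff_X_pow, coeff_X_pow]
  by_cases h : k ∣ n
  · obtain ⟨m, rfl⟩ := h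
    rw [if_pos ⟨m, rfl⟩, Nat.mul_div_cancel_left m hk]
    have h1 : k*m = 0 ↔ m = 0 := by
      constructor
      · intro h'
        rcases Nat.mul_eq_zero.mp h' with h'' | h''
        · omega
        · exact h''
      · rintro rfl; exact Nat.mul_zero k
    have h2 : k*m = k*e ↔ m = e := by
      constructor
      · intro h'; exact Nat.eq_of_mul_eq_mul_left hk h'
      · rintro rfl; rfl
    simp only [h1, h2]
  · rw [if_neg h, if_neg (by rintro rfl; exact h (dvd_zero k)),
      if_neg (by rintro rfl; exact h ⟨e, rfl⟩), sub_zero]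

lemma substQ_pp {k : ℕ} (hk : 0 < k) (j l N : ℕ) :
    substQ k (pp j l N) = pp (k*j) (k*l) N := by
  induction N with
  | zero => simpa [pp] using substQ_one hk
  | succ N ih =>
    rw [pp, Finset.prod_range_succ, ← pp, substQ_mul hk, ih, substQ_one_sub_X_pow hk]
    simp only [pp, Finset.prod_range_succ]
    congr 2
    ring

lemma substQ_qp {k j l : ℕ} (hk : 1 ≤ k) (hj : 1 ≤ j) (hl : 1 ≤ l) :
    substQ k (qp j l) = qp (k*j) (k*l) := by
  ext n
  rw [coeff_substQ, coeff_qp (by nlinarith : 1 ≤ k*j) (by nlinarith : 1 ≤ k*l)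
    (le_refl (n+1)), ← substQ_pp hk, coeff_substQ]
  by_cases h : k ∣ n
  · rw [if_pos h, if_pos h]
    exact coeff_qp hj hl (Nat.succ_le_succ (Nat.div_le_self n k))
  · rw [if_neg h, if_neg h]

lemma constantCoeff_qp {j k : ℕ} (hj : 1 ≤ j) : constantCoeff (qp j k) = 1 := by
  rw [← coeff_zero_eq_constantCoeff, qp, coeff_mk]
  rw [Finset.range_one, Finset.prod_singleton, map_sub, coeff_one, coeff_X_pow]
  rw [if_pos rfl, if_neg (by omega)]
  norm_num

lemma isUnit_qp {j k : ℕ} (hj : 1 ≤ j) : IsUnit (qp j k) := by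
  rw [PowerSeries.isUnit_iff_constantCoeff, constantCoeff_qp hj]
  exact isUnit_one

lemma rinverse_mul {b d : PowerSeries ℤ} (hb : IsUnit b) (hd : IsUnit d) :
    Ring.inverse (b * d) = Ring.inverse b * Ring.inverse d := by
  refine rinverse_eq ?_
  calc (b*d)*(Ring.inverse b * Ring.inverse d) = (b*Ring.inverse b)*(d*Ring.inverse d) := by ring
  _ = 1 := by rw [Ring.mul_inverse_cancel b hb, Ring.mul_inverse_cancel d hd, mul_one]

lemma rinverse_pow {b : PowerSeries ℤ} (hb : IsUnit b) (m : ℕ) :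
    (Ring.inverse b) ^ m = Ring.inverse (b ^ m) := by
  refine (rinverse_eq ?_).symm
  rw [← mul_pow, Ring.mul_inverse_cancel b hb, one_pow]

lemma mi_pow {a b : PowerSeries ℤ} (hb : IsUnit b) (m : ℕ) :
    (a * Ring.inverse b) ^ m = a ^ m * Ring.inverse (b ^ m) := by
  rw [mul_pow, rinverse_pow hb]

lemma mi_mul (a c : PowerSeries ℤ) {b d : PowerSeries ℤ} (hb : IsUnit b) (hd : IsUnit d) :
    (a * Ring.inverse b) * (c * Ring.inverse d) = (a * c) * Ring.inverse (b * d) := by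
  rw [rinverse_mul hb hd]; ring

lemma mi_eq {a b c d : PowerSeries ℤ} (hb : IsUnit b) (hd : IsUnit d)
    (h : a * d = c * b) : a * Ring.inverse b = c * Ring.inverse d := by
  calc a * Ring.inverse b = a * Ring.inverse b * (d * Ring.inverse d) := by
        rw [Ring.mul_inverse_cancel d hd, mul_one]
  _ = (a * d) * Ring.inverse b * Ring.inverse d := by ring
  _ = (c * b) * Ring.inverse b * Ring.inverse d := by rw [h]
  _ = c * (b * Ring.inverse b) * Ring.inverse d := by ring
  _ = c * Ring.inverse d := by rw [Ring.mul_inverse_cancel b hb, mul_one]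

lemma mi_eq' {a b c : PowerSeries ℤ} (hb : IsUnit b)
    (h : a = c * b) : a * Ring.inverse b = c := by
  calc a * Ring.inverse b = c * b * Ring.inverse b := by rw [h]
  _ = c * (b * Ring.inverse b) := by ring
  _ = c := by rw [Ring.mul_inverse_cancel b hb, mul_one]

lemma u3 : IsUnit (qp 3 3) := isUnit_qp (by norm_num)
lemma u6 : IsUnit (qp 6 6) := isUnit_qp (by norm_num)
lemma u9 : IsUnit (qp 9 9) := isUnit_qp (by norm_num)
lemma u18 : IsUnit (qp 18 18) := isUnit_qp (by norm_num)
lemma u918 : IsUnit (qp 9 18) := isUnit_qp (by norm_num)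

lemma split9 : qp 9 9 = qp 9 18 * qp 18 18 := by
  have h := qp_split_two (j := 9) (k := 9) (by norm_num) (by norm_num)
  norm_num at h
  exact h

lemma split6 : qp 6 6 = qp 6 18 * qp 12 18 * qp 18 18 := by
  have h := qp_split_three (j := 6) (k := 6) (by norm_num) (by norm_num)
  norm_num at h
  exact h

lemma Phi9_eq : Phi9 = qp 9 9 ^ 2 * Ring.inverse (qp 18 18) := by
  rw [Phi9, Phi, substQ_mul (by norm_num), substQ_pow (by norm_num),
    substQ_inverse (by norm_num) (isUnit_qp (by norm_num)),
    substQ_qp (by norm_num) (by norm_num) (by norm_num),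
    substQ_qp (by norm_num) (by norm_num) (by norm_num)]

lemma Psi9_eq : Psi9 = qp 18 18 * Ring.inverse (qp 9 18) := by
  rw [Psi9, Psi, substQ_mul (by norm_num),
    substQ_inverse (by norm_num) (isUnit_qp (by norm_num)),
    substQ_qp (by norm_num) (by norm_num) (by norm_num),
    substQ_qp (by norm_num) (by norm_num) (by norm_num)]

lemma P3_eq : P3 = (qp 6 18 * qp 12 18 * qp 9 9 ^ 2) * Ring.inverse (qp 3 3) := by
  rw [P3, Pq, substQ_mul (by norm_num), substQ_mul (by norm_num), substQ_mul (by norm_num),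
    substQ_pow (by norm_num),
    substQ_inverse (by norm_num) (isUnit_qp (by norm_num)),
    substQ_qp (by norm_num) (by norm_num) (by norm_num),
    substQ_qp (by norm_num) (by norm_num) (by norm_num),
    substQ_qp (by norm_num) (by norm_num) (by norm_num),
    substQ_qp (by norm_num) (by norm_num) (by norm_num)]

lemma X3_eq : X3 = (qp 3 3 * qp 18 18 ^ 2) * Ring.inverse (qp 6 6 * qp 9 9) := by
  rw [X3, Xq, substQ_mul (by norm_num), substQ_mul (by norm_num),
    substQ_pow (by norm_num),
    substQ_inverse (by norm_num) ((isUnit_qp (by norm_num)).mul (isUnit_qp (by norm_num))),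
    substQ_mul (by norm_num),
    substQ_qp (by norm_num) (by norm_num) (by norm_num),
    substQ_qp (by norm_num) (by norm_num) (by norm_num),
    substQ_qp (by norm_num) (by norm_num) (by norm_num),
    substQ_qp (by norm_num) (by norm_num) (by norm_num)]

/-- The eta quotient `V` with `X(-q³) = V·Φ(-q⁹)` and `Ψ(q⁹) = V·P(q³)`. -/
noncomputable def Vq : PowerSeries ℤ :=
  (qp 3 3 * qp 18 18 ^ 3) * Ring.inverse (qp 6 6 * qp 9 9 ^ 3)

lemma uV : IsUnit (qp 6 6 * qp 9 9 ^ 3) := u6.mul (u9.pow 3)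

lemma K1 : X3 = Vq * Phi9 := by
  rw [X3_eq, Vq, Phi9_eq, mi_mul _ _ uV u18]
  exact mi_eq (u6.mul u9) (uV.mul u18) (by ring)

lemma K2 : Psi9 = Vq * P3 := by
  rw [Psi9_eq, Vq, P3_eq, mi_mul _ _ uV u3]
  refine mi_eq u918 (uV.mul u3) ?_
  rw [split6, split9]
  ring

lemma uT : IsUnit ((qp 18 18 ^ 8) * (qp 3 3 ^ 8)) := (u18.pow 8).mul (u3.pow 8)

lemma T2 : Vq^2 * (Phi9^8 * P3^8)
    = qp 6 6 ^ 6 * qp 9 9 ^ 26 * Ring.inverse (qp 3 3 ^ 6 * qp 18 18 ^ 10) := by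
  rw [Vq, Phi9_eq, P3_eq, mi_pow uV 2, mi_pow u18 8, mi_pow u3 8,
    mi_mul _ _ (u18.pow 8) (u3.pow 8), mi_mul _ _ (uV.pow 2) uT]
  refine mi_eq ((uV.pow 2).mul uT) ((u3.pow 6).mul (u18.pow 10)) ?_
  rw [split6, split9]; ring

lemma T5 : Vq^5 * (Phi9^8 * P3^8)
    = qp 6 6 ^ 3 * qp 9 9 ^ 17 * Ring.inverse (qp 3 3 ^ 3 * qp 18 18) := by
  rw [Vq, Phi9_eq, P3_eq, mi_pow uV 5, mi_pow u18 8, mi_pow u3 8,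
    mi_mul _ _ (u18.pow 8) (u3.pow 8), mi_mul _ _ (uV.pow 5) uT]
  refine mi_eq ((uV.pow 5).mul uT) ((u3.pow 3).mul u18) ?_
  rw [split6, split9]; ring

lemma T8 : Vq^8 * (Phi9^8 * P3^8) = qp 9 9 ^ 8 * qp 18 18 ^ 8 := by
  rw [Vq, Phi9_eq, P3_eq, mi_pow uV 8, mi_pow u18 8, mi_pow u3 8,
    mi_mul _ _ (u18.pow 8) (u3.pow 8), mi_mul _ _ (uV.pow 8) uT]
  refine mi_eq' ((uV.pow 8).mul uT) ?_
  rw [split6, split9]; ring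

lemma T11 : Vq^11 * (Phi9^8 * P3^8)
    = qp 3 3 ^ 3 * qp 18 18 ^ 17 * Ring.inverse (qp 6 6 ^ 3 * qp 9 9) := by
  rw [Vq, Phi9_eq, P3_eq, mi_pow uV 11, mi_pow u18 8, mi_pow u3 8,
    mi_mul _ _ (u18.pow 8) (u3.pow 8), mi_mul _ _ (uV.pow 11) uT]
  refine mi_eq ((uV.pow 11).mul uT) ((u6.pow 3).mul u9) ?_
  rw [split6, split9]; ring

lemma T14 : Vq^14 * (Phi9^8 * P3^8)
    = qp 3 3 ^ 6 * qp 18 18 ^ 26 * Ring.inverse (qp 6 6 ^ 6 * qp 9 9 ^ 10) := by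
  rw [Vq, Phi9_eq, P3_eq, mi_pow uV 14, mi_pow u18 8, mi_pow u3 8,
    mi_mul _ _ (u18.pow 8) (u3.pow 8), mi_mul _ _ (uV.pow 14) uT]
  refine mi_eq ((uV.pow 14).mul uT) ((u6.pow 6).mul (u9.pow 10)) ?_
  rw [split6, split9]; ring

/-- `z`-level preimages under `substQ 3` of `Vqᵐ·(Φ9⁸P3⁸)`. -/
noncomputable def Gz (m : ℕ) : PowerSeries ℤ :=
  ((qp 1 1 * qp 6 6 ^ 3) * Ring.inverse (qp 2 2 * qp 3 3 ^ 3)) ^ m *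
    ((qp 3 3 ^ 2 * Ring.inverse (qp 6 6)) ^ 8 * Pq ^ 8)

lemma hVq3 : substQ 3 ((qp 1 1 * qp 6 6 ^ 3) * Ring.inverse (qp 2 2 * qp 3 3 ^ 3)) = Vq := by
  rw [substQ_mul (by norm_num), substQ_mul (by norm_num), substQ_pow (by norm_num),
    substQ_inverse (by norm_num) ((isUnit_qp (by norm_num)).mul ((isUnit_qp (by norm_num)).pow 3)),
    substQ_mul (by norm_num), substQ_pow (by norm_num),
    substQ_qp (by norm_num) (by norm_num) (by norm_num),
    substQ_qp (by norm_num) (by norm_num) (by norm_num),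
    substQ_qp (by norm_num) (by norm_num) (by norm_num),
    substQ_qp (by norm_num) (by norm_num) (by norm_num), Vq]

lemma hPhi93 : substQ 3 (qp 3 3 ^ 2 * Ring.inverse (qp 6 6)) = Phi9 := by
  rw [substQ_mul (by norm_num), substQ_pow (by norm_num),
    substQ_inverse (by norm_num) (isUnit_qp (by norm_num)),
    substQ_qp (by norm_num) (by norm_num) (by norm_num),
    substQ_qp (by norm_num) (by norm_num) (by norm_num), ← Phi9_eq]

lemma tm_eq (m : ℕ) : substQ 3 (Gz m) = Vq ^ m * (Phi9 ^ 8 * P3 ^ 8) := by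
  rw [Gz, substQ_mul (by norm_num), substQ_pow (by norm_num), hVq3,
    substQ_mul (by norm_num), substQ_pow (by norm_num), hPhi93,
    substQ_pow (by norm_num), ← P3]

lemma intCast_eq_C (a : ℤ) : ((a : ℤ) : PowerSeries ℤ) = C a := by
  simpa using (map_intCast C a).symm

lemma coeff_term_ne (a : ℤ) (m : ℕ) (g : PowerSeries ℤ) (n : ℕ) (h : n % 3 ≠ m % 3) :
    coeff n ((a : PowerSeries ℤ) * X ^ m * substQ 3 g) = 0 := by
  have h1 : (a : PowerSeries ℤ) * X ^ m * substQ 3 g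
      = ((a : PowerSeries ℤ) * substQ 3 g) * X ^ m := by ring
  rw [h1, coeff_mul_X_pow']
  split_ifs with h2
  · rw [intCast_eq_C, coeff_C_mul, coeff_substQ, if_neg (by omega), mul_zero]
  · rfl

lemma LM_expand : L ^ 4 * M ^ 4 =
      ((1:ℤ) : PowerSeries ℤ) * X ^ 0 * substQ 3 (Gz 0)
    + ((4:ℤ) : PowerSeries ℤ) * X ^ 1 * substQ 3 (Gz 1)
    + ((18:ℤ) : PowerSeries ℤ) * X ^ 2 * substQ 3 (Gz 2)
    + ((32:ℤ) : PowerSeries ℤ) * X ^ 3 * substQ 3 (Gz 3)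
    + ((83:ℤ) : PowerSeries ℤ) * X ^ 4 * substQ 3 (Gz 4)
    + ((72:ℤ) : PowerSeries ℤ) * X ^ 5 * substQ 3 (Gz 5)
    + ((226:ℤ) : PowerSeries ℤ) * X ^ 6 * substQ 3 (Gz 6)
    + ((76:ℤ) : PowerSeries ℤ) * X ^ 7 * substQ 3 (Gz 7)
    + ((513:ℤ) : PowerSeries ℤ) * X ^ 8 * substQ 3 (Gz 8)
    + ((-152:ℤ) : PowerSeries ℤ) * X ^ 9 * substQ 3 (Gz 9)
    + ((904:ℤ) : PowerSeries ℤ) * X ^ 10 * substQ 3 (Gz 10)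
    + ((-576:ℤ) : PowerSeries ℤ) * X ^ 11 * substQ 3 (Gz 11)
    + ((1328:ℤ) : PowerSeries ℤ) * X ^ 12 * substQ 3 (Gz 12)
    + ((-1024:ℤ) : PowerSeries ℤ) * X ^ 13 * substQ 3 (Gz 13)
    + ((1152:ℤ) : PowerSeries ℤ) * X ^ 14 * substQ 3 (Gz 14)
    + ((-512:ℤ) : PowerSeries ℤ) * X ^ 15 * substQ 3 (Gz 15)
    + ((256:ℤ) : PowerSeries ℤ) * X ^ 16 * substQ 3 (Gz 16) := by
  simp only [tm_eq]
  rw [L, M, K1, K2]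
  push_cast
  ring

end Aux

/-- The terms of `L⁴M⁴` with exponents `≡ 2 (mod 3)`, in q-product form. -/
theorem L4M4_dissection_eval :
    PowerSeries.mk (fun m => if m % 3 = 2 then PowerSeries.coeff m (L ^ 4 * M ^ 4) else 0) =
      2 * 3 ^ 2 * (PowerSeries.X : PowerSeries ℤ) ^ 2 * (qp 6 6 ^ 6 * qp 9 9 ^ 26 * Ring.inverse (qp 3 3 ^ 6 * qp 18 18 ^ 10))
      + 8 * 3 ^ 2 * (PowerSeries.X : PowerSeries ℤ) ^ 5 * (qp 6 6 ^ 3 * qp 9 9 ^ 17 * Ring.inverse (qp 3 3 ^ 3 * qp 18 18))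
      + 19 * 3 ^ 3 * (PowerSeries.X : PowerSeries ℤ) ^ 8 * (qp 9 9 ^ 8 * qp 18 18 ^ 8)
      + (-(64 * 3 ^ 2) * (PowerSeries.X : PowerSeries ℤ) ^ 11 * (qp 3 3 ^ 3 * qp 18 18 ^ 17 * Ring.inverse (qp 6 6 ^ 3 * qp 9 9)))
      + 128 * 3 ^ 2 * (PowerSeries.X : PowerSeries ℤ) ^ 14 * (qp 3 3 ^ 6 * qp 18 18 ^ 26 * Ring.inverse (qp 6 6 ^ 6 * qp 9 9 ^ 10)) := by
  have hRHS :
      2 * 3 ^ 2 * (PowerSeries.X : PowerSeries ℤ) ^ 2 * (qp 6 6 ^ 6 * qp 9 9 ^ 26 * Ring.inverse (qp 3 3 ^ 6 * qp 18 18 ^ 10))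
      + 8 * 3 ^ 2 * (PowerSeries.X : PowerSeries ℤ) ^ 5 * (qp 6 6 ^ 3 * qp 9 9 ^ 17 * Ring.inverse (qp 3 3 ^ 3 * qp 18 18))
      + 19 * 3 ^ 3 * (PowerSeries.X : PowerSeries ℤ) ^ 8 * (qp 9 9 ^ 8 * qp 18 18 ^ 8)
      + (-(64 * 3 ^ 2) * (PowerSeries.X : PowerSeries ℤ) ^ 11 * (qp 3 3 ^ 3 * qp 18 18 ^ 17 * Ring.inverse (qp 6 6 ^ 3 * qp 9 9)))
      + 128 * 3 ^ 2 * (PowerSeries.X : PowerSeries ℤ) ^ 14 * (qp 3 3 ^ 6 * qp 18 18 ^ 26 * Ring.inverse (qp 6 6 ^ 6 * qp 9 9 ^ 10))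
      = ((18:ℤ) : PowerSeries ℤ) * X ^ 2 * substQ 3 (Gz 2)
      + ((72:ℤ) : PowerSeries ℤ) * X ^ 5 * substQ 3 (Gz 5)
      + ((513:ℤ) : PowerSeries ℤ) * X ^ 8 * substQ 3 (Gz 8)
      + ((-576:ℤ) : PowerSeries ℤ) * X ^ 11 * substQ 3 (Gz 11)
      + ((1152:ℤ) : PowerSeries ℤ) * X ^ 14 * substQ 3 (Gz 14) := by
    simp only [tm_eq]
    rw [T2, T5, T8, T11, T14]
    push_cast
    ring
  rw [hRHS]
  ext n
  rw [coeff_mk, LM_expand]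
  simp only [map_add]
  by_cases h : n % 3 = 2
  · rw [if_pos h,
      coeff_term_ne 1 0 (Gz 0) n (by omega),
      coeff_term_ne 4 1 (Gz 1) n (by omega),
      coeff_term_ne 32 3 (Gz 3) n (by omega),
      coeff_term_ne 83 4 (Gz 4) n (by omega),
      coeff_term_ne 226 6 (Gz 6) n (by omega),
      coeff_term_ne 76 7 (Gz 7) n (by omega),
      coeff_term_ne (-152) 9 (Gz 9) n (by omega),
      coeff_term_ne 904 10 (Gz 10) n (by omega),
      coeff_term_ne 1328 12 (Gz 12) n (by omega),
      coeff_term_ne (-1024) 13 (Gz 13) n (by omega),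
      coeff_term_ne (-512) 15 (Gz 15) n (by omega),
      coeff_term_ne 256 16 (Gz 16) n (by omega)]
    ring
  · rw [if_neg h,
      coeff_term_ne 18 2 (Gz 2) n (by omega),
      coeff_term_ne 72 5 (Gz 5) n (by omega),
      coeff_term_ne 513 8 (Gz 8) n (by omega),
      coeff_term_ne (-576) 11 (Gz 11) n (by omega),
      coeff_term_ne 1152 14 (Gz 14) n (by omega)]
    ring
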